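/- Let G = (V, E, (V_□, V_◯, V_△)) be a stochastic game, X ⊆ V, and let W be the greatest fixed point W = gfp(Z ↦ lfp(Y ↦ (X ∩ Pre_□(Z) ∩ Pre(Z)) ∪ Pre_□(Y) ∪ Pre(Y) ∪ Pre_△(Z,Y))). Then every vertex u ∈ W ∩ V_□ has at least one successor in W, and every vertex u ∈ W with u ∉ V_□ has all its successors in W. Consequently, every play starting in W that never takes an edge of Edges_□(W, V∖W) remains in W forever. -/
import Mathlib


/-- A stochastic game `G = (V, E, (V_□, V_◯, V_△))`: a directed graph on `V` in
which every vertex has at least one outgoing edge, together with a partition of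
the vertices into Even (`VE = V_□`), Odd (`VO = V_◯`) and Random (`VR = V_△`). -/
structure SGame (V : Type*) where
  E : Set (V × V)
  VE : Set V
  VO : Set V
  VR : Set V
  serial : ∀ u : V, ∃ w, (u, w) ∈ E
  cover : VE ∪ VO ∪ VR = Set.univ
  dEO : Disjoint VE VO
  dER : Disjoint VE VR
  dOR : Disjoint VO VR

namespace SGame

variable {V : Type*}

/-- `Pre(Y) = {u ∈ V : ∀ w, (u,w) ∈ E → w ∈ Y}`. -/
def Pre (G : SGame V) (Y : Set V) : Set V := {u | ∀ w, (u, w) ∈ G.E → w ∈ Y}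

/-- `Pre_□(Y) = {u ∈ V_□ : ∃ w ∈ Y, (u,w) ∈ E}`. -/
def PreE (G : SGame V) (Y : Set V) : Set V := {u | u ∈ G.VE ∧ ∃ w ∈ Y, (u, w) ∈ G.E}

/-- `Pre_△(Z,Y) = {u ∈ V_△ : (∀ w, (u,w) ∈ E → w ∈ Z) ∧ (∃ w ∈ Y, (u,w) ∈ E)}`. -/
def PreR (G : SGame V) (Z Y : Set V) : Set V :=
  {u | u ∈ G.VR ∧ (∀ w, (u, w) ∈ G.E → w ∈ Z) ∧ ∃ w ∈ Y, (u, w) ∈ G.E}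

lemma Pre_mono (G : SGame V) : Monotone G.Pre :=
  fun _ _ h _ hu w hw => h (hu w hw)

lemma PreE_mono (G : SGame V) : Monotone G.PreE := by
  rintro Y Z h u ⟨h1, w, hw, he⟩
  exact ⟨h1, w, h hw, he⟩

lemma PreR_mono (G : SGame V) {Z Z' Y Y' : Set V} (hZ : Z ⊆ Z') (hY : Y ⊆ Y') :
    G.PreR Z Y ⊆ G.PreR Z' Y' := by
  rintro u ⟨h1, h2, w, hw, he⟩
  exact ⟨h1, fun w hw => hZ (h2 w hw), w, hY hw, he⟩

/-- The monotone map `Y ↦ X ∪ Pre(Y)`. -/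
def attrOp (G : SGame V) (X : Set V) : Set V →o Set V :=
  ⟨fun Y => X ∪ G.Pre Y, fun _ _ h => Set.union_subset_union_right X (G.Pre_mono h)⟩

/-- `Attr(X) = lfp (Y ↦ X ∪ Pre(Y))`. -/
def Attr (G : SGame V) (X : Set V) : Set V := OrderHom.lfp (G.attrOp X)

/-- The monotone map `Y ↦ X ∪ Pre(Y) ∪ Pre_□(Y)`. -/
def attrOpE (G : SGame V) (X : Set V) : Set V →o Set V :=
  ⟨fun Y => X ∪ G.Pre Y ∪ G.PreE Y, fun _ _ h =>
    Set.union_subset_union (Set.union_subset_union_right X (G.Pre_mono h)) (G.PreE_mono h)⟩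

/-- `Attr_□(X) = lfp (Y ↦ X ∪ Pre(Y) ∪ Pre_□(Y))`. -/
def AttrE (G : SGame V) (X : Set V) : Set V := OrderHom.lfp (G.attrOpE X)

/-- The monotone map `Y ↦ X ∪ Pre(Y) ∪ Pre_△(Z,Y)` (for a fixed `Z`). -/
def attrOp' (G : SGame V) (X Z : Set V) : Set V →o Set V :=
  ⟨fun Y => X ∪ G.Pre Y ∪ G.PreR Z Y, fun _ _ h =>
    Set.union_subset_union (Set.union_subset_union_right X (G.Pre_mono h))
      (G.PreR_mono le_rfl h)⟩

/-- The monotone map `Z ↦ lfp (Y ↦ X ∪ Pre(Y) ∪ Pre_△(Z,Y))`. -/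
def attrOuter' (G : SGame V) (X : Set V) : Set V →o Set V :=
  ⟨fun Z => OrderHom.lfp (G.attrOp' X Z), by
    intro Z Z' h
    exact OrderHom.lfp.monotone fun Y =>
      Set.union_subset_union_right _ (G.PreR_mono h le_rfl)⟩

/-- `Attr'(X) = gfp (Z ↦ lfp (Y ↦ X ∪ Pre(Y) ∪ Pre_△(Z,Y)))`. -/
def Attr' (G : SGame V) (X : Set V) : Set V := OrderHom.gfp (G.attrOuter' X)

/-- The monotone map `Y ↦ X ∪ Pre_□(Y) ∪ Pre(Y) ∪ Pre_△(Z,Y)` (for a fixed `Z`). -/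
def attrOpE' (G : SGame V) (X Z : Set V) : Set V →o Set V :=
  ⟨fun Y => X ∪ G.PreE Y ∪ G.Pre Y ∪ G.PreR Z Y, fun _ _ h =>
    Set.union_subset_union
      (Set.union_subset_union (Set.union_subset_union_right X (G.PreE_mono h)) (G.Pre_mono h))
      (G.PreR_mono le_rfl h)⟩

/-- The monotone map `Z ↦ lfp (Y ↦ X ∪ Pre_□(Y) ∪ Pre(Y) ∪ Pre_△(Z,Y))`. -/
def attrOuterE' (G : SGame V) (X : Set V) : Set V →o Set V :=
  ⟨fun Z => OrderHom.lfp (G.attrOpE' X Z), by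
    intro Z Z' h
    exact OrderHom.lfp.monotone fun Y =>
      Set.union_subset_union_right _ (G.PreR_mono h le_rfl)⟩

/-- `Attr'_□(X) = gfp (Z ↦ lfp (Y ↦ X ∪ Pre_□(Y) ∪ Pre(Y) ∪ Pre_△(Z,Y)))`. -/
def AttrE' (G : SGame V) (X : Set V) : Set V := OrderHom.gfp (G.attrOuterE' X)

/-- `Edges_□(X,Y) = {(u,w) ∈ E : u ∈ X ∩ V_□ ∧ w ∈ Y}`. -/
def EdgesE (G : SGame V) (X Y : Set V) : Set (V × V) :=
  {e | e ∈ G.E ∧ e.1 ∈ X ∧ e.1 ∈ G.VE ∧ e.2 ∈ Y}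

/-- A play: an infinite sequence of vertices following the edges of the game. -/
def IsPlay (G : SGame V) (v : ℕ → V) : Prop := ∀ i, (v i, v (i + 1)) ∈ G.E

/-- A play is Random-fair if from every Random vertex occurring infinitely
often, every outgoing edge is taken infinitely often. -/
def RandomFair (G : SGame V) (v : ℕ → V) : Prop :=
  ∀ u ∈ G.VR, {i | v i = u}.Infinite →
    ∀ u', (u, u') ∈ G.E → {i | (v i, v (i + 1)) = (u, u')}.Infinite

/-- The monotone map `Y ↦ X ∩ (Pre_□(Y) ∪ Pre(Y))` of the safety algorithm. -/
def safetyOp (G : SGame V) (X : Set V) : Set V →o Set V :=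
  ⟨fun Y => X ∩ (G.PreE Y ∪ G.Pre Y), fun _ _ h =>
    Set.inter_subset_inter (le_refl X)
      (Set.union_subset_union (G.PreE_mono h) (G.Pre_mono h))⟩

/-- The winning set for the safety objective `□X`:
the greatest fixed point of `Y ↦ X ∩ (Pre_□(Y) ∪ Pre(Y))`. -/
def SafeW (G : SGame V) (X : Set V) : Set V := OrderHom.gfp (G.safetyOp X)

end SGame

namespace SGame

variable {V : Type*}

/-- The monotone map `Y ↦ (X ∩ Pre_□(Z) ∩ Pre(Z)) ∪ Pre_□(Y) ∪ Pre(Y) ∪ Pre_△(Z,Y)`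
(for a fixed `Z`). -/
def buchiOp (G : SGame V) (X Z : Set V) : Set V →o Set V :=
  ⟨fun Y => (X ∩ G.PreE Z ∩ G.Pre Z) ∪ G.PreE Y ∪ G.Pre Y ∪ G.PreR Z Y, fun _ _ h =>
    Set.union_subset_union
      (Set.union_subset_union
        (Set.union_subset_union_right _ (G.PreE_mono h)) (G.Pre_mono h))
      (G.PreR_mono le_rfl h)⟩

/-- The monotone map `Z ↦ lfp (Y ↦ (X ∩ Pre_□(Z) ∩ Pre(Z)) ∪ Pre_□(Y) ∪ Pre(Y) ∪ Pre_△(Z,Y))`. -/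
def buchiOuter (G : SGame V) (X : Set V) : Set V →o Set V :=
  ⟨fun Z => OrderHom.lfp (G.buchiOp X Z), by
    intro Z Z' h
    exact OrderHom.lfp.monotone fun Y =>
      Set.union_subset_union
        (Set.union_subset_union
          (Set.union_subset_union
            (Set.inter_subset_inter
              (Set.inter_subset_inter (le_refl X) (G.PreE_mono h)) (G.Pre_mono h))
            le_rfl)
          le_rfl)
        (G.PreR_mono h le_rfl)⟩

/-- `W = gfp (Z ↦ lfp (Y ↦ (X ∩ Pre_□(Z) ∩ Pre(Z)) ∪ Pre_□(Y) ∪ Pre(Y) ∪ Pre_△(Z,Y)))`,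
the winning set of the Büchi objective `□◇X`. -/
def BuchiW (G : SGame V) (X : Set V) : Set V := OrderHom.gfp (G.buchiOuter X)

end SGame

/-- Closedness of the Büchi winning region `W`: every Even vertex of `W` has a
successor in `W`, every non-Even vertex of `W` has all its successors in `W`,
and consequently every play starting in `W` that never takes an edge of
`Edges_□(W, V∖W)` remains in `W` forever. -/
theorem buchiW_closed {V : Type*} [Fintype V] (G : SGame V) (X : Set V)
    (W : Set V) (hW : W = G.BuchiW X) :
    (∀ u ∈ W ∩ G.VE, ∃ w ∈ W, (u, w) ∈ G.E) ∧
    (∀ u ∈ W, u ∉ G.VE → ∀ w, (u, w) ∈ G.E → w ∈ W) ∧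
    (∀ v : ℕ → V, G.IsPlay v → v 0 ∈ W →
      (∀ i, (v i, v (i + 1)) ∉ G.EdgesE W Wᶜ) → ∀ i, v i ∈ W) := by
  have hfix : G.buchiOp X W W = W := by
    have h1 : G.buchiOuter X W = W := by
      rw [hW]; exact OrderHom.map_gfp (G.buchiOuter X)
    have h2 : G.buchiOp X W (OrderHom.lfp (G.buchiOp X W)) = OrderHom.lfp (G.buchiOp X W) :=
      OrderHom.map_lfp _
    have h3 : OrderHom.lfp (G.buchiOp X W) = W := h1
    rw [h3] at h2; exact h2
  have hmem : ∀ u ∈ W, u ∈ (X ∩ G.PreE W ∩ G.Pre W) ∪ G.PreE W ∪ G.Pre W ∪ G.PreR W W := by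
    intro u hu
    have : u ∈ G.buchiOp X W W := by rw [hfix]; exact hu
    exact this
  have hE : ∀ u ∈ W ∩ G.VE, ∃ w ∈ W, (u, w) ∈ G.E := by
    rintro u ⟨huW, _⟩
    rcases hmem u huW with (((⟨⟨_, _, w, hw, he⟩, _⟩ | ⟨_, w, hw, he⟩) | hp) | ⟨_, hp, _⟩)
    · exact ⟨w, hw, he⟩
    · exact ⟨w, hw, he⟩
    · obtain ⟨w, he⟩ := G.serial u; exact ⟨w, hp w he, he⟩
    · obtain ⟨w, he⟩ := G.serial u; exact ⟨w, hp w he, he⟩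
  have hNE : ∀ u ∈ W, u ∉ G.VE → ∀ w, (u, w) ∈ G.E → w ∈ W := by
    intro u huW hne w hw
    rcases hmem u huW with (((⟨_, hp⟩ | ⟨he, _⟩) | hp) | ⟨_, hp, _⟩)
    · exact hp w hw
    · exact absurd he hne
    · exact hp w hw
    · exact hp w hw
  refine ⟨hE, hNE, ?_⟩
  intro v hplay h0 hedge i
  induction i with
  | zero => exact h0
  | succ n ih =>
    by_cases hve : v n ∈ G.VE
    · by_contra hc
      exact hedge n ⟨hplay n, ih, hve, hc⟩
    · exact hNE (v n) ih hve (v (n + 1)) (hplay n)
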